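/- Fix real numbers λ, θ, ζ, ρ, u, T with ζ ≠ 0 and T > 0. Let y₁, y₂ : ℝ → ℝ be twice differentiable solutions of the linear second-order equation y''(t) + (λ - ρζut/T)·y'(t) + (ζ²/4)·(ut/T)·(ut/T - 1)·y(t) = 0 on [0, T], and set w(t) := y₂'(0)·y₁(t) - y₁'(0)·y₂(t). If w(t) ≠ 0 for all t ∈ [0, T], then ψ(t) := -(2/ζ²)·w'(t)/w(t) satisfies ψ(0) = 0 and the Heston average-price Riccati equation ψ'(t) = (ζ²/2)·ψ(t)² - (λ - ρζut/T)·ψ(t) + (1/2)·(ut/T)·(ut/T - 1) for all t ∈ [0, T]. -/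

import Mathlib

open Set

lemma heston_riccati_aux (ζ W W' L a b : ℝ) (hζ : ζ ≠ 0) (hW : W ≠ 0) :
    -(2 / ζ ^ 2) * (((-L * W' - ζ ^ 2 / 4 * a * b * W) * W - W' * W') / W ^ 2) =
    ζ ^ 2 / 2 * (-(2 / ζ ^ 2) * (W' / W)) ^ 2 - L * (-(2 / ζ ^ 2) * (W' / W))
      + 1 / 2 * a * b := by
  field_simp
  ring

/-- Heston average-price Riccati equation: if `y₁, y₂` solve the linearized
second-order equation `y'' + (λ - ρζut/T) y' + (ζ²/4)(ut/T)(ut/T - 1) y = 0` on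
`[0,T]` and the Wronskian-type combination `w(t) = y₂'(0) y₁(t) - y₁'(0) y₂(t)` never
vanishes there, then `ψ = -(2/ζ²) w'/w` satisfies `ψ(0) = 0` and
`ψ' = (ζ²/2) ψ² - (λ - ρζut/T) ψ + (1/2)(ut/T)(ut/T - 1)` on `[0,T]`. -/
theorem heston_average_price_riccati
    (lam θ ζ ρ u T : ℝ) (hζ : ζ ≠ 0) (hT : 0 < T)
    (y₁ y₁' y₁'' y₂ y₂' y₂'' : ℝ → ℝ)
    (hy₁ : ∀ t ∈ Icc (0 : ℝ) T, HasDerivWithinAt y₁ (y₁' t) (Icc 0 T) t)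
    (hy₁' : ∀ t ∈ Icc (0 : ℝ) T, HasDerivWithinAt y₁' (y₁'' t) (Icc 0 T) t)
    (hy₂ : ∀ t ∈ Icc (0 : ℝ) T, HasDerivWithinAt y₂ (y₂' t) (Icc 0 T) t)
    (hy₂' : ∀ t ∈ Icc (0 : ℝ) T, HasDerivWithinAt y₂' (y₂'' t) (Icc 0 T) t)
    (hode₁ : ∀ t ∈ Icc (0 : ℝ) T,
      y₁'' t + (lam - ρ * ζ * u * t / T) * y₁' t
        + (ζ ^ 2 / 4) * (u * t / T) * (u * t / T - 1) * y₁ t = 0)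
    (hode₂ : ∀ t ∈ Icc (0 : ℝ) T,
      y₂'' t + (lam - ρ * ζ * u * t / T) * y₂' t
        + (ζ ^ 2 / 4) * (u * t / T) * (u * t / T - 1) * y₂ t = 0)
    (w w' ψ : ℝ → ℝ)
    (hw : ∀ t, w t = y₂' 0 * y₁ t - y₁' 0 * y₂ t)
    (hw' : ∀ t, w' t = y₂' 0 * y₁' t - y₁' 0 * y₂' t)
    (hψ : ∀ t, ψ t = -(2 / ζ ^ 2) * (w' t / w t))
    (hwne : ∀ t ∈ Icc (0 : ℝ) T, w t ≠ 0) :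
    ψ 0 = 0 ∧
    ∀ t ∈ Icc (0 : ℝ) T,
      HasDerivWithinAt ψ
        ((ζ ^ 2 / 2) * ψ t ^ 2 - (lam - ρ * ζ * u * t / T) * ψ t
          + (1 / 2) * (u * t / T) * (u * t / T - 1)) (Icc 0 T) t := by
  constructor
  · have h0 : y₂' 0 * y₁' 0 - y₁' 0 * y₂' 0 = 0 := by ring
    rw [hψ, hw', h0, zero_div, mul_zero]
  · intro t ht
    have hwd : HasDerivWithinAt w (w' t) (Icc 0 T) t := by
      rw [hw']
      exact (((hy₁ t ht).const_mul (y₂' 0)).sub ((hy₂ t ht).const_mul (y₁' 0))).congr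
        (fun x _ => hw x) (hw t)
    have hw'd : HasDerivWithinAt w' (y₂' 0 * y₁'' t - y₁' 0 * y₂'' t) (Icc 0 T) t :=
      (((hy₁' t ht).const_mul (y₂' 0)).sub ((hy₂' t ht).const_mul (y₁' 0))).congr
        (fun x _ => hw' x) (hw' t)
    have hq := (hw'd.div hwd (hwne t ht)).const_mul (-(2 / ζ ^ 2))
    have hode : y₂' 0 * y₁'' t - y₁' 0 * y₂'' t =
        -(lam - ρ * ζ * u * t / T) * w' t
          - ζ ^ 2 / 4 * (u * t / T) * (u * t / T - 1) * w t := by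
      rw [hw, hw']
      linear_combination y₂' 0 * hode₁ t ht - y₁' 0 * hode₂ t ht
    have hq' := hq.congr (fun x _ => hψ x) (hψ t)
    refine hq'.congr_deriv (Eq.symm ?_)
    rw [hψ, hode]
    exact (heston_riccati_aux ζ (w t) (w' t) (lam - ρ * ζ * u * t / T)
      (u * t / T) (u * t / T - 1) hζ (hwne t ht)).symm
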